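/- Assume 0 < σ_y < √(2 κ_t a_I) and let ψ* := arcsin(σ_y/√(2 κ_t a_I)). Then G_c(ψ*) = a_I; in particular the piecewise fracture-energy law, equal to the constant a_I for ψ ≤ ψ* and to G_c(ψ) for ψ* ≤ ψ < π/2, is continuous at ψ*. -/

import Mathlib

open Real

/-- With `ψ* = arcsin(σy/√(2 κt a_I))` and `0 < σy < √(2 κt a_I)`,
the fracture-energy law satisfies `G_c(ψ*) = a_I`; in particular the piecewise law,
equal to the constant `a_I` for `ψ ≤ ψ*` and to `G_c(ψ)` for `ψ* ≤ ψ < π/2`,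
is continuous at `ψ*`. -/
theorem stmt6 (κt κH aI σy : ℝ)
    (hκt : 0 < κt) (hκH : 0 < κH) (haI : 0 < aI)
    (hσy : 0 < σy) (hσy' : σy < Real.sqrt (2 * κt * aI))
    (Gc : ℝ → ℝ)
    (hGc : ∀ ψ, Gc ψ = (2 * aI * (κt + κH) - σy ^ 2) * (1 + Real.tan ψ ^ 2)
        / (2 * (κt + κH + κH * Real.tan ψ ^ 2)))
    (ψs : ℝ) (hψs : ψs = Real.arcsin (σy / Real.sqrt (2 * κt * aI))) :
    Gc ψs = aI ∧
    ContinuousAt (fun ψ : ℝ => if ψ ≤ ψs then aI else Gc ψ) ψs := by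
  have hA : 0 < 2 * κt * aI := by positivity
  have hsA : 0 < Real.sqrt (2 * κt * aI) := Real.sqrt_pos.mpr hA
  have hs1 : σy / Real.sqrt (2 * κt * aI) < 1 := (div_lt_one hsA).mpr hσy'
  have hs0 : 0 < σy / Real.sqrt (2 * κt * aI) := by positivity
  have hσ2 : σy ^ 2 < 2 * κt * aI := (Real.lt_sqrt hσy.le).mp hσy'
  have hd : 0 < 2 * κt * aI - σy ^ 2 := by linarith
  have htan2 : Real.tan ψs ^ 2 = σy ^ 2 / (2 * κt * aI - σy ^ 2) := by
    rw [hψs, Real.tan_arcsin]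
    have h1 : (0 : ℝ) < 1 - (σy / Real.sqrt (2 * κt * aI)) ^ 2 := by nlinarith
    rw [div_pow, Real.sq_sqrt h1.le, div_pow, Real.sq_sqrt hA.le]
    field_simp
  have hGcψs : Gc ψs = aI := by
    rw [hGc, htan2]
    have hD : (0 : ℝ) < κt + κH + κH * (σy ^ 2 / (2 * κt * aI - σy ^ 2)) := by positivity
    rw [div_eq_iff (by positivity)]
    field_simp [(by linarith : 0 < 2 * aI * κt - σy ^ 2).ne']
    ring
  refine ⟨hGcψs, ?_⟩
  have hψ0 : 0 < ψs := hψs ▸ Real.arcsin_pos.mpr hs0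
  have hψlt : ψs < π / 2 := by
    rw [hψs]
    exact Real.arcsin_lt_pi_div_two.mpr hs1
  have hcos : Real.cos ψs ≠ 0 :=
    (Real.cos_pos_of_mem_Ioo ⟨by linarith [Real.pi_pos], hψlt⟩).ne'
  have htanc : ContinuousAt Real.tan ψs := Real.continuousAt_tan.mpr hcos
  have hden : 2 * (κt + κH + κH * Real.tan ψs ^ 2) ≠ 0 := by positivity
  have hGccont : ContinuousAt Gc ψs := by
    have hfe : Gc = fun ψ => (2 * aI * (κt + κH) - σy ^ 2) * (1 + Real.tan ψ ^ 2)
        / (2 * (κt + κH + κH * Real.tan ψ ^ 2)) := funext hGc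
    rw [hfe]
    exact (continuousAt_const.mul (continuousAt_const.add (htanc.pow 2))).div
      (continuousAt_const.mul (continuousAt_const.add
        (continuousAt_const.mul (htanc.pow 2)))) hden
  have h : Filter.Tendsto (fun ψ : ℝ => if ψ ≤ ψs then aI else Gc ψ)
      (nhds ψs) (nhds aI) :=
    Filter.Tendsto.if' tendsto_const_nhds (hGcψs ▸ hGccont)
  simpa [ContinuousAt] using h
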